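/- arXiv:2011.11463 — 2 statements merged into one kernel-verified Lean document; each statement's English description precedes it below -/
import Mathlib

section
/- Dual feasibility of the primal–dual algorithm (second part of the Lemma): the values y_{i,j}(t) produced by Alg. 1 at the end of slot T satisfy 0 ≤ y_{i,j}(t) ≤ 1/N for all i, j ≤ t, t, and Σ_{i=1}^N 1_{i,k}(t) Σ_{j=1}^t Σ_{τ=t}^T y_{i,j}(τ) ≤ C_k for every k ∈ {1,…,M} and t ∈ {1,…,T}. -/
open scoped Classical
open MeasureTheory

noncomputable section

/-- Age of information of user `i` under schedule `d`:
`a_i(0) = 0`, and `a_i(t) = 0` if `1_{i,d(t)}(t) = 1`, `a_i(t) = a_i(t-1) + 1` otherwise. -/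
def age (ind : ℕ → ℕ → ℕ → ℝ) (d : ℕ → ℕ) (i : ℕ) : ℕ → ℕ
  | 0 => 0
  | t + 1 => if ind i (d (t + 1)) (t + 1) = 1 then 0 else age ind d i t + 1

/-- Inner loop of Alg. 1 at a fixed slot: `innerLoop Ck θ ps j` is the value of the current
slot's `x`-variable after processing iterations `1, …, j`, where `ps j` is the (final)
contribution `Σ_{τ=j}^{t-1} x_{k*_τ}(τ)` of the earlier slots.  At iteration `j` the current
value of `Σ_{τ=j}^{t} x_{k*_τ}(τ)` is `ps j + innerLoop Ck θ ps (j-1)`; if it is `< 1`, the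
`x`-variable is increased by `(1/Ck) Σ_{τ=j}^{t} x_{k*_τ}(τ) + 1/(θ·Ck)`. -/
def innerLoop (Ck θ : ℝ) (ps : ℕ → ℝ) : ℕ → ℝ
  | 0 => 0
  | j + 1 =>
      if ps (j + 1) + innerLoop Ck θ ps j < 1 then
        innerLoop Ck θ ps j + (ps (j + 1) + innerLoop Ck θ ps j) / Ck + 1 / (θ * Ck)
      else innerLoop Ck θ ps j

/-- `xvec Ck θ t τ` : the value of `x_{k*_τ}(τ)` after Alg. 1 has processed slots `1, …, t`
(`Ck τ` stands for the cost `C_{k*_τ}` used in slot `τ`). -/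
def xvec (Ck : ℕ → ℝ) (θ : ℝ) : ℕ → ℕ → ℝ
  | 0, _ => 0
  | t + 1, τ =>
      if τ = t + 1 then
        innerLoop (Ck (t + 1)) θ (fun j => ∑ σ ∈ Finset.Ico j (t + 1), xvec Ck θ t σ) (t + 1)
      else xvec Ck θ t τ

/-- Final value of `x_{k*_t}(t)` computed by Alg. 1. -/
def xval (Ck : ℕ → ℝ) (θ : ℝ) (t : ℕ) : ℝ := xvec Ck θ t t

/-- `psFun Ck θ t j = Σ_{σ=j}^{t-1} x_{k*_σ}(σ)` (final values of the slots before `t`). -/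
def psFun (Ck : ℕ → ℝ) (θ : ℝ) (t : ℕ) (j : ℕ) : ℝ :=
  ∑ σ ∈ Finset.Ico j t, xvec Ck θ (t - 1) σ

/-- The update condition of Alg. 1 at iteration `j` of slot `t`: the current value of
`Σ_{τ=j}^{t} x_{k*_τ}(τ)` (earlier slots final, slot `t` after iterations `1,…,j-1`) is `< 1`. -/
def algCond (Ck : ℕ → ℝ) (θ : ℝ) (t j : ℕ) : Prop :=
  psFun Ck θ t j + innerLoop (Ck t) θ (psFun Ck θ t) (j - 1) < 1

/-- Final value of `z_{i,j}(t)` computed by Alg. 1 (it is the same for every user `i`). -/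
def zval (Ck : ℕ → ℝ) (θ : ℝ) (j t : ℕ) : ℝ :=
  if algCond Ck θ t j then
    1 - (psFun Ck θ t j + innerLoop (Ck t) θ (psFun Ck θ t) (j - 1))
  else 0

/-- Final value of `y_{i,j}(t)` computed by Alg. 1 (it is the same for every user `i`). -/
def yval (Ck : ℕ → ℝ) (θ : ℝ) (N : ℕ) (j t : ℕ) : ℝ :=
  if algCond Ck θ t j then 1 / N else 0

/-- `k*_t`: the minimum power level `k ≥ 1` with `1_{i,k}(t) = 1` for every user `i`. -/
def kstar (ind : ℕ → ℕ → ℕ → ℝ) (N : ℕ) (t : ℕ) : ℕ :=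
  sInf {k : ℕ | 1 ≤ k ∧ ∀ i ∈ Finset.Icc 1 N, ind i k t = 1}

/-- `X(t) = Σ_{τ=1}^t min{x_{k*_τ}(τ), 1}`, used by Alg. 2 (so `X(0) = 0`). -/
def bigX (Ck : ℕ → ℝ) (θ : ℝ) (t : ℕ) : ℝ :=
  ∑ τ ∈ Finset.Icc 1 t, min (xval Ck θ τ) 1

/-- Alg. 2 transmits in slot `t` for randomness `u` iff `u + k ∈ [X(t-1), X(t))` for some
integer `k ≥ 0`. -/
def transmits (Ck : ℕ → ℝ) (θ : ℝ) (u : ℝ) (t : ℕ) : Prop :=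
  ∃ k : ℕ, bigX Ck θ (t - 1) ≤ u + k ∧ u + k < bigX Ck θ t

/-- The decision of Alg. 2 in slot `t` for randomness `u`: transmit with power `k*_t`, or idle. -/
def dAlg (ind : ℕ → ℕ → ℕ → ℝ) (N : ℕ) (Ck : ℕ → ℝ) (θ : ℝ) (u : ℝ) (t : ℕ) : ℕ :=
  if transmits Ck θ u t then kstar ind N t else 0

/-- The constant `θ = (1 + 1/C_M)^⌊C_1⌋ − 1` of Alg. 1. -/
def thetaOf (C : ℕ → ℝ) (M : ℕ) : ℝ := (1 + 1 / C M) ^ ⌊C 1⌋ - 1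

/-! ### Auxiliary lemmas for `stmt5` -/

lemma innerLoop_succ (Cc θ : ℝ) (ps : ℕ → ℝ) (j : ℕ) :
    innerLoop Cc θ ps (j + 1) =
      if ps (j + 1) + innerLoop Cc θ ps j < 1 then
        innerLoop Cc θ ps j + (ps (j + 1) + innerLoop Cc θ ps j) / Cc + 1 / (θ * Cc)
      else innerLoop Cc θ ps j := by
  rw [innerLoop]

lemma innerLoop_nonneg {Cc θ : ℝ} (hC : 0 < Cc) (hθ : 0 < θ) {ps : ℕ → ℝ}
    (hps : ∀ j, 0 ≤ ps j) : ∀ j, 0 ≤ innerLoop Cc θ ps j := by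
  intro j
  induction j with
  | zero => simp [innerLoop]
  | succ n ih =>
    rw [innerLoop_succ]
    split
    · have h1 : 0 ≤ (ps (n + 1) + innerLoop Cc θ ps n) / Cc :=
        div_nonneg (by linarith [hps (n + 1)]) hC.le
      have h2 : (0:ℝ) ≤ 1 / (θ * Cc) := by positivity
      linarith
    · exact ih

lemma innerLoop_mono {Cc θ : ℝ} (hC : 0 < Cc) (hθ : 0 < θ) {ps : ℕ → ℝ}
    (hps : ∀ j, 0 ≤ ps j) : Monotone (innerLoop Cc θ ps) := by
  apply monotone_nat_of_le_succ
  intro n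
  rw [innerLoop_succ]
  split
  · have h1 : 0 ≤ (ps (n + 1) + innerLoop Cc θ ps n) / Cc :=
      div_nonneg (by linarith [hps (n + 1), innerLoop_nonneg hC hθ hps n]) hC.le
    have h2 : (0:ℝ) ≤ 1 / (θ * Cc) := by positivity
    linarith
  · exact le_rfl

lemma xvec_nonneg {Ck : ℕ → ℝ} {θ : ℝ} (hC : ∀ τ, 0 < Ck τ) (hθ : 0 < θ) :
    ∀ t τ, 0 ≤ xvec Ck θ t τ := by
  intro t
  induction t with
  | zero => intro τ; simp [xvec]
  | succ s ih =>
    intro τ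
    rw [xvec]
    split
    · exact innerLoop_nonneg (hC (s + 1)) hθ
        (fun j => Finset.sum_nonneg fun σ _ => ih σ) _
    · exact ih τ

lemma psFun_nonneg {Ck : ℕ → ℝ} {θ : ℝ} (hC : ∀ τ, 0 < Ck τ) (hθ : 0 < θ) (t j : ℕ) :
    0 ≤ psFun Ck θ t j :=
  Finset.sum_nonneg fun σ _ => xvec_nonneg hC hθ _ σ

lemma psFun_succ_eq (Ck : ℕ → ℝ) (θ : ℝ) (s : ℕ) :
    psFun Ck θ (s + 1) = fun j => ∑ σ ∈ Finset.Ico j (s + 1), xvec Ck θ s σ := by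
  funext j; simp [psFun]

lemma xvec_diag (Ck : ℕ → ℝ) (θ : ℝ) (s : ℕ) :
    xvec Ck θ (s + 1) (s + 1) = innerLoop (Ck (s + 1)) θ (psFun Ck θ (s + 1)) (s + 1) := by
  rw [xvec, if_pos rfl, psFun_succ_eq]

lemma xvec_ne (Ck : ℕ → ℝ) (θ : ℝ) (s τ : ℕ) (h : τ ≠ s + 1) :
    xvec Ck θ (s + 1) τ = xvec Ck θ s τ := by
  rw [xvec, if_neg h]

/-- The running value of `Σ_{σ=t}^{τ} x(σ)` after iterations `1,…,j` of slot `τ`. -/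
def fAux (Ck : ℕ → ℝ) (θ : ℝ) (t τ j : ℕ) : ℝ :=
  (∑ σ ∈ Finset.Ico t τ, xvec Ck θ (τ - 1) σ) + innerLoop (Ck τ) θ (psFun Ck θ τ) j

section FAux

variable {Ck : ℕ → ℝ} {θ CM : ℝ}

lemma fAux_nonneg (hC : ∀ τ, 0 < Ck τ) (hθ : 0 < θ) (t τ j : ℕ) :
    0 ≤ fAux Ck θ t τ j :=
  add_nonneg (Finset.sum_nonneg fun σ _ => xvec_nonneg hC hθ _ σ)
    (innerLoop_nonneg (hC τ) hθ (fun i => psFun_nonneg hC hθ τ i) j)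

lemma fAux_mono (hC : ∀ τ, 0 < Ck τ) (hθ : 0 < θ) (t τ : ℕ) {a b : ℕ} (hab : a ≤ b) :
    fAux Ck θ t τ a ≤ fAux Ck θ t τ b :=
  add_le_add_right (innerLoop_mono (hC τ) hθ (fun i => psFun_nonneg hC hθ τ i) hab) _

lemma fAux_step (hC : ∀ τ, 0 < Ck τ) (hθ : 0 < θ) {t τ : ℕ} (ht : 1 ≤ t) (hτ : t ≤ τ) :
    fAux Ck θ t τ τ = fAux Ck θ t (τ + 1) 0 := by
  obtain ⟨s, rfl⟩ : ∃ s, τ = s + 1 := ⟨τ - 1, by omega⟩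
  show _ = (∑ σ ∈ Finset.Ico t (s + 1 + 1), xvec Ck θ (s + 1 + 1 - 1) σ) +
      innerLoop (Ck (s + 1 + 1)) θ (psFun Ck θ (s + 1 + 1)) 0
  have h0 : innerLoop (Ck (s + 1 + 1)) θ (psFun Ck θ (s + 1 + 1)) 0 = 0 := by
    simp [innerLoop]
  rw [h0, add_zero]
  have hsum : ∑ σ ∈ Finset.Ico t (s + 1 + 1), xvec Ck θ (s + 1 + 1 - 1) σ =
      (∑ σ ∈ Finset.Ico t (s + 1), xvec Ck θ (s + 1) σ) + xvec Ck θ (s + 1) (s + 1) := by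
    simp only [Nat.add_sub_cancel]
    exact Finset.sum_Ico_succ_top hτ _
  rw [hsum]
  have hcongr : ∑ σ ∈ Finset.Ico t (s + 1), xvec Ck θ (s + 1) σ =
      ∑ σ ∈ Finset.Ico t (s + 1), xvec Ck θ (s + 1 - 1) σ := by
    apply Finset.sum_congr rfl
    intro σ hσ
    have : σ ≠ s + 1 := by
      have := (Finset.mem_Ico.mp hσ).2; omega
    rw [Nat.add_sub_cancel, xvec_ne Ck θ s σ this]
  rw [hcongr, xvec_diag]
  rfl

lemma fAux_mono_tau (hC : ∀ τ, 0 < Ck τ) (hθ : 0 < θ) {t : ℕ} (ht : 1 ≤ t)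
    {τ' τ : ℕ} (h1 : t ≤ τ') (h2 : τ' ≤ τ) : fAux Ck θ t τ' 0 ≤ fAux Ck θ t τ 0 := by
  induction τ, h2 using Nat.le_induction with
  | base => exact le_rfl
  | succ m hm ih =>
    calc fAux Ck θ t τ' 0 ≤ fAux Ck θ t m 0 := ih
      _ ≤ fAux Ck θ t m m := fAux_mono hC hθ t m (Nat.zero_le m)
      _ = fAux Ck θ t (m + 1) 0 := fAux_step hC hθ ht (le_trans h1 hm)

lemma fAux_bridge (hC : ∀ τ, 0 < Ck τ) (hθ : 0 < θ) {t τ' j' τ j : ℕ} (ht : 1 ≤ t)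
    (hj't : j' ≤ t) (hτ't : t ≤ τ') (hτt : t ≤ τ)
    (hlex : τ' < τ ∨ (τ' = τ ∧ j' < j)) :
    fAux Ck θ t τ' j' ≤ fAux Ck θ t τ (j - 1) := by
  rcases hlex with h | ⟨rfl, hjj⟩
  · calc fAux Ck θ t τ' j' ≤ fAux Ck θ t τ' τ' := fAux_mono hC hθ t τ' (le_trans hj't hτ't)
      _ = fAux Ck θ t (τ' + 1) 0 := fAux_step hC hθ ht hτ't
      _ ≤ fAux Ck θ t τ 0 := fAux_mono_tau hC hθ ht (by omega) (by omega)
      _ ≤ fAux Ck θ t τ (j - 1) := fAux_mono hC hθ t τ (Nat.zero_le _)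
  · exact fAux_mono hC hθ t τ' (by omega)

lemma fAux_lt_one (hC : ∀ τ, 0 < Ck τ) (hθ : 0 < θ) {t τ j : ℕ}
    (hjt : j ≤ t) (hc : algCond Ck θ τ j) : fAux Ck θ t τ (j - 1) < 1 := by
  have hsub : (∑ σ ∈ Finset.Ico t τ, xvec Ck θ (τ - 1) σ) ≤ psFun Ck θ τ j := by
    apply Finset.sum_le_sum_of_subset_of_nonneg
    · exact Finset.Ico_subset_Ico hjt le_rfl
    · intro σ _ _; exact xvec_nonneg hC hθ _ σ
  have := hc
  unfold algCond at this
  unfold fAux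
  linarith

lemma fAux_update (hCk1 : ∀ σ, 1 ≤ Ck σ) (hCkM : ∀ σ, Ck σ ≤ CM) (hθ : 0 < θ)
    {t τ j : ℕ} (hj1 : 1 ≤ j) (hjt : j ≤ t) (hc : algCond Ck θ τ j) :
    fAux Ck θ t τ (j - 1) * (1 + 1 / CM) + 1 / (θ * CM) ≤ fAux Ck θ t τ j := by
  have hC : ∀ σ, 0 < Ck σ := fun σ => lt_of_lt_of_le one_pos (hCk1 σ)
  have hCM0 : (0:ℝ) < CM := lt_of_lt_of_le (hC τ) (hCkM τ)
  obtain ⟨j₀, rfl⟩ : ∃ j₀, j = j₀ + 1 := ⟨j - 1, by omega⟩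
  have hc' : psFun Ck θ τ (j₀ + 1) + innerLoop (Ck τ) θ (psFun Ck θ τ) j₀ < 1 := by
    have := hc; unfold algCond at this; simpa using this
  have hsimp : j₀ + 1 - 1 = j₀ := by omega
  set A : ℝ := ∑ σ ∈ Finset.Ico t τ, xvec Ck θ (τ - 1) σ with hA
  set IL : ℝ := innerLoop (Ck τ) θ (psFun Ck θ τ) j₀ with hIL
  have hA0 : 0 ≤ A := Finset.sum_nonneg fun σ _ => xvec_nonneg hC hθ _ σ
  have hIL0 : 0 ≤ IL := innerLoop_nonneg (hC τ) hθ (fun i => psFun_nonneg hC hθ τ i) j₀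
  have hAP : A ≤ psFun Ck θ τ (j₀ + 1) := by
    apply Finset.sum_le_sum_of_subset_of_nonneg
    · exact Finset.Ico_subset_Ico (by omega) le_rfl
    · intro σ _ _; exact xvec_nonneg hC hθ _ σ
  have hgoal : fAux Ck θ t τ (j₀ + 1) =
      A + (IL + (psFun Ck θ τ (j₀ + 1) + IL) / Ck τ + 1 / (θ * Ck τ)) := by
    unfold fAux
    rw [innerLoop_succ, if_pos (by rw [← hIL]; exact hc'), ← hIL]
  have hbefore : fAux Ck θ t τ (j₀ + 1 - 1) = A + IL := by
    unfold fAux; rw [hsimp, ← hIL]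
  rw [hgoal, hbefore]
  have h1 : (A + IL) / CM ≤ (psFun Ck θ τ (j₀ + 1) + IL) / Ck τ := by
    rw [div_le_div_iff₀ hCM0 (hC τ)]
    nlinarith [hCkM τ, hC τ, hCk1 τ]
  have h2 : 1 / (θ * CM) ≤ 1 / (θ * Ck τ) := by
    apply one_div_le_one_div_of_le (mul_pos hθ (hC τ))
    exact mul_le_mul_of_nonneg_left (hCkM τ) hθ.le
  have hexp : (A + IL) * (1 + 1 / CM) = (A + IL) + (A + IL) / CM := by
    rw [mul_add, mul_one, mul_one_div]
  rw [hexp]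
  linarith

end FAux

/-- decode the lexicographic encoding -/
lemma enc_decode {t τ τ' j j' : ℕ} (hj : j ≤ t)
    (h : τ' * (t + 1) + j' < τ * (t + 1) + j) : τ' < τ ∨ (τ' = τ ∧ j' < j) := by
  rcases lt_trichotomy τ' τ with h1 | h1 | h1
  · exact Or.inl h1
  · subst h1; exact Or.inr ⟨rfl, lt_of_add_lt_add_left h⟩
  · exfalso
    have h2 : (τ + 1) * (t + 1) ≤ τ' * (t + 1) := Nat.mul_le_mul_right (t + 1) h1
    have h3 : (τ + 1) * (t + 1) = τ * (t + 1) + (t + 1) := by ring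
    have hj1 : j < t + 1 := Nat.lt_succ_of_le hj
    linarith

lemma enc_eq {t τ τ' j j' : ℕ} (hj : j ≤ t) (hj' : j' ≤ t)
    (h : τ' * (t + 1) + j' = τ * (t + 1) + j) : τ' = τ ∧ j' = j := by
  rcases lt_trichotomy τ' τ with h1 | h1 | h1
  · exfalso
    have h2 : (τ' + 1) * (t + 1) ≤ τ * (t + 1) := Nat.mul_le_mul_right (t + 1) h1
    have h3 : (τ' + 1) * (t + 1) = τ' * (t + 1) + (t + 1) := by ring
    have hj1 : j' < t + 1 := Nat.lt_succ_of_le hj'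
    linarith
  · subst h1; exact ⟨rfl, Nat.add_left_cancel h⟩
  · exfalso
    have h2 : (τ + 1) * (t + 1) ≤ τ' * (t + 1) := Nat.mul_le_mul_right (t + 1) h1
    have h3 : (τ + 1) * (t + 1) = τ * (t + 1) + (t + 1) := by ring
    have hj1 : j < t + 1 := Nat.lt_succ_of_le hj
    linarith

lemma key_count {Ck : ℕ → ℝ} {θ CM : ℝ} (hCk1 : ∀ σ, 1 ≤ Ck σ) (hCkM : ∀ σ, Ck σ ≤ CM)
    (hθ : 0 < θ) (t T : ℕ) (ht : 1 ≤ t) :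
    ∀ n : ℕ, ∀ p ∈ (Finset.Icc 1 t ×ˢ Finset.Icc t T).filter
        (fun q : ℕ × ℕ => algCond Ck θ q.2 q.1),
      (((Finset.Icc 1 t ×ˢ Finset.Icc t T).filter
        (fun q : ℕ × ℕ => algCond Ck θ q.2 q.1)).filter
          (fun q => q.2 * (t + 1) + q.1 < p.2 * (t + 1) + p.1)).card = n →
      ((1 + 1 / CM) ^ n - 1) / θ ≤ fAux Ck θ t p.2 (p.1 - 1) := by
  have hC : ∀ σ, 0 < Ck σ := fun σ => lt_of_lt_of_le one_pos (hCk1 σ)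
  have hCM0 : (0:ℝ) < CM := lt_of_lt_of_le (hC 0) (hCkM 0)
  set P := (Finset.Icc 1 t ×ˢ Finset.Icc t T).filter
      (fun q : ℕ × ℕ => algCond Ck θ q.2 q.1) with hP
  have hmemP : ∀ q ∈ P, (1 ≤ q.1 ∧ q.1 ≤ t) ∧ (t ≤ q.2 ∧ q.2 ≤ T) ∧ algCond Ck θ q.2 q.1 := by
    intro q hq
    rw [hP, Finset.mem_filter, Finset.mem_product, Finset.mem_Icc, Finset.mem_Icc] at hq
    exact ⟨hq.1.1, hq.1.2, hq.2⟩
  intro n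
  induction n with
  | zero =>
    intro p hp _
    simp only [pow_zero, sub_self, zero_div]
    exact fAux_nonneg hC hθ t p.2 (p.1 - 1)
  | succ n ih =>
    intro p hp hcard
    set Q := P.filter (fun q => q.2 * (t + 1) + q.1 < p.2 * (t + 1) + p.1) with hQ
    have hQne : Q.Nonempty := by
      rw [← Finset.card_pos, hcard]; omega
    obtain ⟨p', hp'Q, hp'max⟩ := Q.exists_max_image (fun q => q.2 * (t + 1) + q.1) hQne
    have hp'P : p' ∈ P := by
      rw [hQ, Finset.mem_filter] at hp'Q; exact hp'Q.1
    have hp'lt : p'.2 * (t + 1) + p'.1 < p.2 * (t + 1) + p.1 := by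
      rw [hQ, Finset.mem_filter] at hp'Q; exact hp'Q.2
    set Q' := P.filter (fun q => q.2 * (t + 1) + q.1 < p'.2 * (t + 1) + p'.1) with hQ'
    have hQeq : Q = insert p' Q' := by
      ext q
      simp only [hQ, hQ', Finset.mem_insert, Finset.mem_filter]
      constructor
      · rintro ⟨hqP, hqlt⟩
        by_cases hqq : q = p'
        · exact Or.inl hqq
        · right
          refine ⟨hqP, ?_⟩
          have hle : q.2 * (t + 1) + q.1 ≤ p'.2 * (t + 1) + p'.1 := by
            apply hp'max
            rw [hQ, Finset.mem_filter]; exact ⟨hqP, hqlt⟩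
          rcases lt_or_eq_of_le hle with h | h
          · exact h
          · exfalso
            have he := enc_eq (hmemP p' hp'P).1.2 (hmemP q hqP).1.2 h
            exact hqq (Prod.ext_iff.mpr ⟨he.2, he.1⟩)
      · rintro (rfl | ⟨hqP, hqlt⟩)
        · exact ⟨hp'P, hp'lt⟩
        · exact ⟨hqP, lt_trans hqlt hp'lt⟩
    have hp'notin : p' ∉ Q' := by
      rw [hQ', Finset.mem_filter]
      rintro ⟨-, h⟩; exact lt_irrefl _ h
    have hQ'card : Q'.card = n := by
      rw [hQeq, Finset.card_insert_of_notMem hp'notin] at hcard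
      omega
    have hIH : ((1 + 1 / CM) ^ n - 1) / θ ≤ fAux Ck θ t p'.2 (p'.1 - 1) :=
      ih p' hp'P (by rw [← hQ']; exact hQ'card)
    obtain ⟨⟨hp'11, hp'1t⟩, ⟨hp'2t, _⟩, hp'cond⟩ := hmemP p' hp'P
    obtain ⟨⟨hp11, hp1t⟩, ⟨hp2t, _⟩, _⟩ := hmemP p hp
    have hupd : fAux Ck θ t p'.2 (p'.1 - 1) * (1 + 1 / CM) + 1 / (θ * CM) ≤
        fAux Ck θ t p'.2 p'.1 := fAux_update hCk1 hCkM hθ hp'11 hp'1t hp'cond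
    have hbr : fAux Ck θ t p'.2 p'.1 ≤ fAux Ck θ t p.2 (p.1 - 1) :=
      fAux_bridge hC hθ ht hp'1t hp'2t hp2t (enc_decode hp1t hp'lt)
    have hΦ : ((1 + 1 / CM) ^ (n + 1) - 1) / θ =
        ((1 + 1 / CM) ^ n - 1) / θ * (1 + 1 / CM) + 1 / (θ * CM) := by
      have hne := hCM0.ne'
      have hθne := hθ.ne'
      rw [pow_succ]
      field_simp
      ring
    have hpos : (0:ℝ) ≤ 1 + 1 / CM := by positivity
    calc ((1 + 1 / CM) ^ (n + 1) - 1) / θ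
        = ((1 + 1 / CM) ^ n - 1) / θ * (1 + 1 / CM) + 1 / (θ * CM) := hΦ
      _ ≤ fAux Ck θ t p'.2 (p'.1 - 1) * (1 + 1 / CM) + 1 / (θ * CM) := by
          have := mul_le_mul_of_nonneg_right hIH hpos; linarith
      _ ≤ fAux Ck θ t p'.2 p'.1 := hupd
      _ ≤ fAux Ck θ t p.2 (p.1 - 1) := hbr

/-- dual feasibility of the solution produced by Alg. 1: the final values
`y_{i,j}(t)` satisfy `0 ≤ y_{i,j}(t) ≤ 1/N`, and
`Σ_{i=1}^N 1_{i,k}(t) Σ_{j=1}^t Σ_{τ=t}^T y_{i,j}(τ) ≤ C_k` for every `k ∈ {1,…,M}` and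
`t ∈ {1,…,T}`. -/
theorem stmt5 (N M T : ℕ) (hN : 1 ≤ N) (hM : 1 ≤ M) (hT : 1 ≤ T)
    (ind : ℕ → ℕ → ℕ → ℝ)
    (hind01 : ∀ i k t, ind i k t = 0 ∨ ind i k t = 1)
    (hmono : ∀ i k k' t, k ≤ k' → ind i k t = 1 → ind i k' t = 1)
    (hcov : ∀ i t, ind i M t = 1)
    (C : ℕ → ℝ) (hC1 : 1 ≤ C 1)
    (hCmono : ∀ k k', 1 ≤ k → k ≤ k' → k' ≤ M → C k ≤ C k') :
    (∀ j t : ℕ,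
      0 ≤ yval (fun τ => C (kstar ind N τ)) (thetaOf C M) N j t ∧
      yval (fun τ => C (kstar ind N τ)) (thetaOf C M) N j t ≤ 1 / N) ∧
    (∀ k ∈ Finset.Icc 1 M, ∀ t ∈ Finset.Icc 1 T,
      ∑ i ∈ Finset.Icc 1 N,
          ind i k t * ∑ j ∈ Finset.Icc 1 t, ∑ τ ∈ Finset.Icc t T,
            yval (fun σ => C (kstar ind N σ)) (thetaOf C M) N j τ
        ≤ C k) := by
  have hCM1 : (1:ℝ) ≤ C M := le_trans hC1 (hCmono 1 M le_rfl hM le_rfl)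
  have hCM0 : (0:ℝ) < C M := lt_of_lt_of_le one_pos hCM1
  set θ := thetaOf C M with hθdef
  set Ck : ℕ → ℝ := fun τ => C (kstar ind N τ) with hCkdef
  have hks : ∀ τ, 1 ≤ kstar ind N τ ∧ kstar ind N τ ≤ M := by
    intro τ
    have hmem : M ∈ {k : ℕ | 1 ≤ k ∧ ∀ i ∈ Finset.Icc 1 N, ind i k τ = 1} :=
      ⟨hM, fun i _ => hcov i τ⟩
    unfold kstar
    exact ⟨(Nat.sInf_mem ⟨M, hmem⟩).1, Nat.sInf_le hmem⟩
  have hCk1 : ∀ τ, 1 ≤ Ck τ := fun τ =>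
    le_trans hC1 (hCmono 1 _ le_rfl (hks τ).1 (hks τ).2)
  have hCkM : ∀ τ, Ck τ ≤ C M := fun τ => hCmono _ M (hks τ).1 (hks τ).2 le_rfl
  have hC : ∀ τ, 0 < Ck τ := fun τ => lt_of_lt_of_le one_pos (hCk1 τ)
  have hfl1 : (1:ℤ) ≤ ⌊C 1⌋ := by
    rw [Int.le_floor]; exact_mod_cast hC1
  set F : ℕ := ⌊C 1⌋.toNat with hF
  have hF1 : 1 ≤ F := by omega
  have hθeq : θ = (1 + 1 / C M) ^ F - 1 := by
    rw [hθdef]; unfold thetaOf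
    congr 1
    rw [show ⌊C 1⌋ = (F : ℤ) by omega, zpow_natCast]
  have hu1 : (1:ℝ) < 1 + 1 / C M := by
    have : (0:ℝ) < 1 / C M := by positivity
    linarith
  have hθpos : 0 < θ := by
    rw [hθeq]
    have : (1:ℝ) < (1 + 1 / C M) ^ F := one_lt_pow₀ hu1 (by omega)
    linarith
  have hN0 : (0:ℝ) < (N:ℝ) := by exact_mod_cast hN
  constructor
  · intro j t
    constructor
    · unfold yval; split
      · positivity
      · exact le_rfl
    · unfold yval; split
      · exact le_rfl
      · positivity
  · intro k hk t ht'
    rw [Finset.mem_Icc] at hk ht'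
    obtain ⟨hk1, hkM⟩ := hk
    obtain ⟨ht1, htT⟩ := ht'
    set P := (Finset.Icc 1 t ×ˢ Finset.Icc t T).filter
        (fun q : ℕ × ℕ => algCond Ck θ q.2 q.1) with hP
    have hmemP : ∀ q ∈ P, (1 ≤ q.1 ∧ q.1 ≤ t) ∧ (t ≤ q.2 ∧ q.2 ≤ T) ∧ algCond Ck θ q.2 q.1 := by
      intro q hq
      rw [hP, Finset.mem_filter, Finset.mem_product, Finset.mem_Icc, Finset.mem_Icc] at hq
      exact ⟨hq.1.1, hq.1.2, hq.2⟩
    have hC1k : C 1 ≤ C k := hCmono 1 k le_rfl hk1 hkM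
    have hcard : (P.card : ℝ) ≤ C 1 := by
      rcases P.eq_empty_or_nonempty with h | h
      · rw [h]; simp; linarith
      · obtain ⟨p, hpP, hpmax⟩ := P.exists_max_image (fun q => q.2 * (t + 1) + q.1) h
        set Q := P.filter (fun q => q.2 * (t + 1) + q.1 < p.2 * (t + 1) + p.1) with hQ
        have hPeq : P = insert p Q := by
          ext q
          simp only [hQ, Finset.mem_insert, Finset.mem_filter]
          constructor
          · intro hqP
            by_cases hqq : q = p
            · exact Or.inl hqq
            · right
              refine ⟨hqP, ?_⟩
              rcases lt_or_eq_of_le (hpmax q hqP) with hlt | heq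
              · exact hlt
              · exfalso
                have he := enc_eq (hmemP p hpP).1.2 (hmemP q hqP).1.2 heq
                exact hqq (Prod.ext_iff.mpr ⟨he.2, he.1⟩)
          · rintro (rfl | ⟨hqP, _⟩)
            · exact hpP
            · exact hqP
        have hpnotin : p ∉ Q := by
          rw [hQ, Finset.mem_filter]
          rintro ⟨-, hx⟩; exact lt_irrefl _ hx
        have hPcard : P.card = Q.card + 1 := by
          rw [hPeq, Finset.card_insert_of_notMem hpnotin]
        have hkey : ((1 + 1 / C M) ^ Q.card - 1) / θ ≤ fAux Ck θ t p.2 (p.1 - 1) := by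
          refine key_count hCk1 hCkM hθpos t T ht1 Q.card p ?_ ?_
          · rw [← hP]; exact hpP
          · rw [← hP, ← hQ]
        have hlt1 : fAux Ck θ t p.2 (p.1 - 1) < 1 :=
          fAux_lt_one hC hθpos (hmemP p hpP).1.2 (hmemP p hpP).2.2
        have hΦlt : ((1 + 1 / C M) ^ Q.card - 1) / θ < 1 := lt_of_le_of_lt hkey hlt1
        have hpowlt : (1 + 1 / C M) ^ Q.card < (1 + 1 / C M) ^ F := by
          rw [div_lt_one hθpos] at hΦlt
          rw [hθeq] at hΦlt
          linarith
        have hQF : Q.card < F := by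
          by_contra hcon
          push_neg at hcon
          have := pow_le_pow_right₀ hu1.le hcon
          linarith
        have hPF : P.card ≤ F := by omega
        have hFC : (F : ℝ) ≤ C 1 := by
          have h1 := Int.floor_le (C 1)
          have h2 : ((F : ℤ) : ℝ) = ((⌊C 1⌋ : ℤ) : ℝ) := by
            norm_cast; omega
          push_cast at h2
          linarith
        calc (P.card : ℝ) ≤ (F : ℝ) := by exact_mod_cast hPF
          _ ≤ C 1 := hFC
    have hS : (∑ j ∈ Finset.Icc 1 t, ∑ τ ∈ Finset.Icc t T, yval Ck θ N j τ) =
        P.card * (1 / (N:ℝ)) := by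
      rw [← Finset.sum_product']
      calc ∑ q ∈ Finset.Icc 1 t ×ˢ Finset.Icc t T, yval Ck θ N q.1 q.2
          = ∑ q ∈ Finset.Icc 1 t ×ˢ Finset.Icc t T,
              if algCond Ck θ q.2 q.1 then (1 / (N:ℝ)) else 0 := rfl
        _ = ∑ _q ∈ P, (1 / (N:ℝ)) := by rw [hP, Finset.sum_filter]
        _ = P.card * (1 / (N:ℝ)) := by rw [Finset.sum_const, nsmul_eq_mul]
    have hS0 : 0 ≤ ∑ j ∈ Finset.Icc 1 t, ∑ τ ∈ Finset.Icc t T, yval Ck θ N j τ := by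
      rw [hS]; positivity
    calc ∑ i ∈ Finset.Icc 1 N,
            ind i k t * ∑ j ∈ Finset.Icc 1 t, ∑ τ ∈ Finset.Icc t T, yval Ck θ N j τ
        ≤ ∑ i ∈ Finset.Icc 1 N,
            1 * ∑ j ∈ Finset.Icc 1 t, ∑ τ ∈ Finset.Icc t T, yval Ck θ N j τ := by
          refine Finset.sum_le_sum fun i _ => mul_le_mul_of_nonneg_right ?_ hS0
          rcases hind01 i k t with h | h <;> simp [h]
      _ = (N:ℝ) * (P.card * (1 / (N:ℝ))) := by
          rw [hS, Finset.sum_const, Nat.card_Icc, nsmul_eq_mul]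
          norm_num
      _ = (P.card : ℝ) := by field_simp
      _ ≤ C 1 := hcard
      _ ≤ C k := hC1k


end
end

section
/- Per-iteration primal–dual relation: whenever the update condition of Alg. 1 holds at iteration j of slot t, the resulting increment of the primal objective Σ_{t=1}^T (Σ_{k=1}^M C_k x_k(t) + (1/N) Σ_{i=1}^N Σ_{j=1}^t z_{i,j}(t)) equals 1 + 1/θ, and the resulting increment of the dual objective Σ_{t=1}^T Σ_{i=1}^N Σ_{j=1}^t y_{i,j}(t) equals 1; when the condition fails both increments are 0. Consequently, the final primal objective value P and final dual objective value D computed by Alg. 1 satisfy P = (1 + 1/θ)·D. -/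
open scoped Classical
open MeasureTheory

noncomputable section

/-- Telescoping sum over `Icc 1 t`. -/
lemma telescope_Icc (t : ℕ) (f : ℕ → ℝ) (h0 : f 0 = 0) :
    (∑ j ∈ Finset.Icc 1 t, (f j - f (j - 1))) = f t := by
  rw [← Finset.Ico_add_one_right_eq_Icc, Finset.sum_Ico_eq_sum_range]
  have h : ∀ i : ℕ, f (1 + i) - f (1 + i - 1) = f (i + 1) - f i := by
    intro i; rw [Nat.add_sub_cancel_left, Nat.add_comm]
  rw [Nat.add_sub_cancel]
  calc ∑ i ∈ Finset.range t, (f (1 + i) - f (1 + i - 1))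
      = ∑ i ∈ Finset.range t, (f (i + 1) - f i) :=
        Finset.sum_congr rfl (fun i _ => h i)
    _ = f t - f 0 := Finset.sum_range_sub f t
    _ = f t := by rw [h0, sub_zero]

/-- Per-iteration primal–dual relation, abstract version. -/
lemma keyA (Ck : ℕ → ℝ) (θ : ℝ) (N t j : ℕ) (hN : 1 ≤ N) (hC : Ck t ≠ 0)
    (hθ : θ ≠ 0) (hj : 1 ≤ j) :
    (algCond Ck θ t j →
      Ck t * (innerLoop (Ck t) θ (psFun Ck θ t) j
              - innerLoop (Ck t) θ (psFun Ck θ t) (j - 1))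
        + (1 / N) * ∑ i ∈ Finset.Icc 1 N, zval Ck θ j t = 1 + 1 / θ
      ∧ ∑ i ∈ Finset.Icc 1 N, yval Ck θ N j t = 1) ∧
    (¬ algCond Ck θ t j →
      Ck t * (innerLoop (Ck t) θ (psFun Ck θ t) j
              - innerLoop (Ck t) θ (psFun Ck θ t) (j - 1))
        + (1 / N) * ∑ i ∈ Finset.Icc 1 N, zval Ck θ j t = 0
      ∧ ∑ i ∈ Finset.Icc 1 N, yval Ck θ N j t = 0) := by
  obtain ⟨m, rfl⟩ : ∃ m, j = m + 1 := ⟨j - 1, (Nat.succ_pred_eq_of_pos hj).symm⟩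
  have hm : m + 1 - 1 = m := by omega
  have hNR : (N : ℝ) ≠ 0 := Nat.cast_ne_zero.mpr (Nat.one_le_iff_ne_zero.mp hN)
  have hcard : (Finset.Icc 1 N).card = N := by
    rw [Nat.card_Icc]; omega
  constructor
  · intro hcond
    have hcond' : psFun Ck θ t (m + 1) + innerLoop (Ck t) θ (psFun Ck θ t) m < 1 := by
      have := hcond; unfold algCond at this; rwa [hm] at this
    have hIL : innerLoop (Ck t) θ (psFun Ck θ t) (m + 1)
        = innerLoop (Ck t) θ (psFun Ck θ t) m
          + (psFun Ck θ t (m + 1) + innerLoop (Ck t) θ (psFun Ck θ t) m) / Ck t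
          + 1 / (θ * Ck t) := by
      rw [innerLoop, if_pos hcond']
    have hz : zval Ck θ (m + 1) t
        = 1 - (psFun Ck θ t (m + 1) + innerLoop (Ck t) θ (psFun Ck θ t) m) := by
      unfold zval; rw [if_pos hcond, hm]
    have hy : yval Ck θ N (m + 1) t = 1 / N := by
      unfold yval; rw [if_pos hcond]
    constructor
    · rw [hIL, hm]
      rw [Finset.sum_const, hcard, hz]
      set S := psFun Ck θ t (m + 1) + innerLoop (Ck t) θ (psFun Ck θ t) m with hS
      have : innerLoop (Ck t) θ (psFun Ck θ t) m + S / Ck t + 1 / (θ * Ck t)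
          - innerLoop (Ck t) θ (psFun Ck θ t) m = S / Ck t + 1 / (θ * Ck t) := by ring
      rw [this]
      field_simp
      ring
    · rw [Finset.sum_const, hcard, hy, nsmul_eq_mul]
      field_simp
  · intro hcond
    have hcond' : ¬ (psFun Ck θ t (m + 1) + innerLoop (Ck t) θ (psFun Ck θ t) m < 1) := by
      intro h; exact hcond (by unfold algCond; rwa [hm])
    have hIL : innerLoop (Ck t) θ (psFun Ck θ t) (m + 1)
        = innerLoop (Ck t) θ (psFun Ck θ t) m := by
      rw [innerLoop, if_neg hcond']
    have hz : zval Ck θ (m + 1) t = 0 := by unfold zval; rw [if_neg hcond]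
    have hy : yval Ck θ N (m + 1) t = 0 := by unfold yval; rw [if_neg hcond]
    constructor
    · rw [hIL, hm, sub_self, mul_zero, hz, Finset.sum_const, smul_zero, mul_zero, add_zero]
    · rw [hy, Finset.sum_const, smul_zero]

/-- `xval` coincides with the inner loop run on `psFun`. -/
lemma xval_eq_innerLoop (Ck : ℕ → ℝ) (θ : ℝ) (t : ℕ) (ht : 1 ≤ t) :
    xval Ck θ t = innerLoop (Ck t) θ (psFun Ck θ t) t := by
  obtain ⟨m, rfl⟩ : ∃ m, t = m + 1 := ⟨t - 1, (Nat.succ_pred_eq_of_pos ht).symm⟩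
  unfold xval
  rw [xvec, if_pos rfl]
  congr 1

/-- per-iteration primal–dual relation for Alg. 1: whenever the update
condition holds at iteration `j` of slot `t`, the increment of the primal objective
(`C_{k*_t}` times the increase of `x_{k*_t}(t)`, plus `(1/N) Σ_i z_{i,j}(t)`) equals
`1 + 1/θ` and the increment of the dual objective equals `1`; when the condition fails both
increments are `0`.  Consequently the final primal objective `P` and the final dual
objective `D` satisfy `P = (1 + 1/θ)·D`. -/
theorem stmt8 (N M T : ℕ) (hN : 1 ≤ N) (hM : 1 ≤ M) (hT : 1 ≤ T)
    (ind : ℕ → ℕ → ℕ → ℝ)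
    (hind01 : ∀ i k t, ind i k t = 0 ∨ ind i k t = 1)
    (hmono : ∀ i k k' t, k ≤ k' → ind i k t = 1 → ind i k' t = 1)
    (hcov : ∀ i t, ind i M t = 1)
    (C : ℕ → ℝ) (hC1 : 1 ≤ C 1)
    (hCmono : ∀ k k', 1 ≤ k → k ≤ k' → k' ≤ M → C k ≤ C k') :
    (∀ t ∈ Finset.Icc 1 T, ∀ j ∈ Finset.Icc 1 t,
      (algCond (fun τ => C (kstar ind N τ)) (thetaOf C M) t j →
        C (kstar ind N t)
            * (innerLoop (C (kstar ind N t)) (thetaOf C M)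
                  (psFun (fun τ => C (kstar ind N τ)) (thetaOf C M) t) j
                - innerLoop (C (kstar ind N t)) (thetaOf C M)
                    (psFun (fun τ => C (kstar ind N τ)) (thetaOf C M) t) (j - 1))
          + (1 / N) * ∑ i ∈ Finset.Icc 1 N,
              zval (fun τ => C (kstar ind N τ)) (thetaOf C M) j t
          = 1 + 1 / thetaOf C M
        ∧ ∑ i ∈ Finset.Icc 1 N, yval (fun τ => C (kstar ind N τ)) (thetaOf C M) N j t = 1)
      ∧ (¬ algCond (fun τ => C (kstar ind N τ)) (thetaOf C M) t j →
        C (kstar ind N t)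
            * (innerLoop (C (kstar ind N t)) (thetaOf C M)
                  (psFun (fun τ => C (kstar ind N τ)) (thetaOf C M) t) j
                - innerLoop (C (kstar ind N t)) (thetaOf C M)
                    (psFun (fun τ => C (kstar ind N τ)) (thetaOf C M) t) (j - 1))
          + (1 / N) * ∑ i ∈ Finset.Icc 1 N,
              zval (fun τ => C (kstar ind N τ)) (thetaOf C M) j t
          = 0
        ∧ ∑ i ∈ Finset.Icc 1 N,
            yval (fun τ => C (kstar ind N τ)) (thetaOf C M) N j t = 0)) ∧
    (∑ t ∈ Finset.Icc 1 T,
        (∑ k ∈ Finset.Icc 1 M,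
            C k * (if k = kstar ind N t then
                xval (fun τ => C (kstar ind N τ)) (thetaOf C M) t else 0)
          + (1 / N) * ∑ i ∈ Finset.Icc 1 N, ∑ j ∈ Finset.Icc 1 t,
              zval (fun τ => C (kstar ind N τ)) (thetaOf C M) j t)
      = (1 + 1 / thetaOf C M)
          * ∑ t ∈ Finset.Icc 1 T, ∑ i ∈ Finset.Icc 1 N, ∑ j ∈ Finset.Icc 1 t,
              yval (fun τ => C (kstar ind N τ)) (thetaOf C M) N j t) := by
  set Ckf : ℕ → ℝ := fun τ => C (kstar ind N τ) with hCkf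
  set θ : ℝ := thetaOf C M with hθdef
  -- kstar lies in [1, M]
  have hks : ∀ t, 1 ≤ kstar ind N t ∧ kstar ind N t ≤ M := by
    intro t
    have hMmem : M ∈ {k : ℕ | 1 ≤ k ∧ ∀ i ∈ Finset.Icc 1 N, ind i k t = 1} :=
      ⟨hM, fun i _ => hcov i t⟩
    have hne : {k : ℕ | 1 ≤ k ∧ ∀ i ∈ Finset.Icc 1 N, ind i k t = 1}.Nonempty := ⟨M, hMmem⟩
    have hmem := Nat.sInf_mem hne
    exact ⟨hmem.1, Nat.sInf_le hMmem⟩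
  have hCM : 1 ≤ C M := le_trans hC1 (hCmono 1 M le_rfl hM le_rfl)
  have hCMpos : (0 : ℝ) < C M := lt_of_lt_of_le one_pos hCM
  -- θ > 0
  have hθpos : 0 < θ := by
    rw [hθdef]
    unfold thetaOf
    have h1 : (1 : ℝ) < 1 + 1 / C M := by
      have : (0 : ℝ) < 1 / C M := by positivity
      linarith
    have hfl : (0 : ℤ) < ⌊C 1⌋ := by
      have : (1 : ℤ) ≤ ⌊C 1⌋ := by
        rw [Int.le_floor]; exact_mod_cast hC1
      omega
    have := one_lt_zpow₀ h1 hfl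
    linarith
  have hθne : θ ≠ 0 := ne_of_gt hθpos
  have hCk1 : ∀ t, 1 ≤ Ckf t := by
    intro t
    exact le_trans hC1 (hCmono 1 (kstar ind N t) le_rfl (hks t).1 (hks t).2)
  have hCkne : ∀ t, Ckf t ≠ 0 := fun t =>
    ne_of_gt (lt_of_lt_of_le one_pos (hCk1 t))
  have hkey : ∀ t j, 1 ≤ j →
      (algCond Ckf θ t j →
        Ckf t * (innerLoop (Ckf t) θ (psFun Ckf θ t) j
                - innerLoop (Ckf t) θ (psFun Ckf θ t) (j - 1))
          + (1 / N) * ∑ i ∈ Finset.Icc 1 N, zval Ckf θ j t = 1 + 1 / θ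
        ∧ ∑ i ∈ Finset.Icc 1 N, yval Ckf θ N j t = 1) ∧
      (¬ algCond Ckf θ t j →
        Ckf t * (innerLoop (Ckf t) θ (psFun Ckf θ t) j
                - innerLoop (Ckf t) θ (psFun Ckf θ t) (j - 1))
          + (1 / N) * ∑ i ∈ Finset.Icc 1 N, zval Ckf θ j t = 0
        ∧ ∑ i ∈ Finset.Icc 1 N, yval Ckf θ N j t = 0) :=
    fun t j hj => keyA Ckf θ N t j hN (hCkne t) hθne hj
  constructor
  · intro t _ j hj
    exact hkey t j (Finset.mem_Icc.mp hj).1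
  · -- global identity
    have hterm : ∀ t ∈ Finset.Icc 1 T, ∀ j ∈ Finset.Icc 1 t,
        Ckf t * (innerLoop (Ckf t) θ (psFun Ckf θ t) j
                - innerLoop (Ckf t) θ (psFun Ckf θ t) (j - 1))
          + (1 / N) * ∑ i ∈ Finset.Icc 1 N, zval Ckf θ j t
        = (1 + 1 / θ) * ∑ i ∈ Finset.Icc 1 N, yval Ckf θ N j t := by
      intro t _ j hj
      have hj1 := (Finset.mem_Icc.mp hj).1
      by_cases hc : algCond Ckf θ t j
      · obtain ⟨h1, h2⟩ := (hkey t j hj1).1 hc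
        rw [h1, h2, mul_one]
      · obtain ⟨h1, h2⟩ := (hkey t j hj1).2 hc
        rw [h1, h2, mul_zero]
    calc ∑ t ∈ Finset.Icc 1 T,
          (∑ k ∈ Finset.Icc 1 M,
              C k * (if k = kstar ind N t then xval Ckf θ t else 0)
            + (1 / N) * ∑ i ∈ Finset.Icc 1 N, ∑ j ∈ Finset.Icc 1 t, zval Ckf θ j t)
        = ∑ t ∈ Finset.Icc 1 T, ∑ j ∈ Finset.Icc 1 t,
            (Ckf t * (innerLoop (Ckf t) θ (psFun Ckf θ t) j
                     - innerLoop (Ckf t) θ (psFun Ckf θ t) (j - 1))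
              + (1 / N) * ∑ i ∈ Finset.Icc 1 N, zval Ckf θ j t) := by
          refine Finset.sum_congr rfl (fun t ht => ?_)
          have ht1 := (Finset.mem_Icc.mp ht).1
          have hsingle : ∑ k ∈ Finset.Icc 1 M,
              C k * (if k = kstar ind N t then xval Ckf θ t else 0)
              = Ckf t * xval Ckf θ t := by
            rw [Finset.sum_eq_single (kstar ind N t)]
            · rw [if_pos rfl]
            · intro b _ hb; rw [if_neg hb, mul_zero]
            · intro habs
              exact absurd (Finset.mem_Icc.mpr ⟨(hks t).1, (hks t).2⟩) habs
          have htel : Ckf t * xval Ckf θ t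
              = ∑ j ∈ Finset.Icc 1 t,
                  Ckf t * (innerLoop (Ckf t) θ (psFun Ckf θ t) j
                          - innerLoop (Ckf t) θ (psFun Ckf θ t) (j - 1)) := by
            rw [← Finset.mul_sum,
              telescope_Icc t (fun j => innerLoop (Ckf t) θ (psFun Ckf θ t) j) rfl,
              xval_eq_innerLoop Ckf θ t ht1]
          have hzsum : (1 / (N : ℝ)) * ∑ i ∈ Finset.Icc 1 N, ∑ j ∈ Finset.Icc 1 t,
                zval Ckf θ j t
              = ∑ j ∈ Finset.Icc 1 t,
                  (1 / (N : ℝ)) * ∑ i ∈ Finset.Icc 1 N, zval Ckf θ j t := by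
            rw [Finset.sum_comm, Finset.mul_sum]
          rw [hsingle, htel, hzsum, ← Finset.sum_add_distrib]
      _ = ∑ t ∈ Finset.Icc 1 T, ∑ j ∈ Finset.Icc 1 t,
            (1 + 1 / θ) * ∑ i ∈ Finset.Icc 1 N, yval Ckf θ N j t := by
          refine Finset.sum_congr rfl (fun t ht => Finset.sum_congr rfl (fun j hj => ?_))
          exact hterm t ht j hj
      _ = (1 + 1 / θ) * ∑ t ∈ Finset.Icc 1 T, ∑ i ∈ Finset.Icc 1 N,
            ∑ j ∈ Finset.Icc 1 t, yval Ckf θ N j t := by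
          rw [Finset.mul_sum]
          refine Finset.sum_congr rfl (fun t _ => ?_)
          rw [← Finset.mul_sum, Finset.sum_comm]

end
end
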